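/- Let ε ∈ (0, √(2/(eπ))], Δ > 0, and k = (√2/Δ)·√(ln(2/(πε²))). Then for all real x with |x| ≥ Δ/2, |erf(kx) - sgn(x)| ≤ ε, where erf is the Gauss error function and sgn the sign function. -/

import Mathlib

open Real

open MeasureTheory


lemma gauss_int : Integrable (fun s : ℝ => Real.exp (-s^2)) := by
  have := integrable_exp_neg_mul_sq (one_pos (α := ℝ)); simpa using this

lemma tail_mul (y : ℝ) : ∫ s in Set.Ioi y, s * Real.exp (-s^2) = Real.exp (-y^2) / 2 := by
  have hderiv : ∀ x ∈ Set.Ici y, HasDerivAt (fun s : ℝ => -Real.exp (-s^2) / 2)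
      (x * Real.exp (-x^2)) x := by
    intro x _
    have h : HasDerivAt (fun s : ℝ => -Real.exp (-s^2) / 2) _ x := (((hasDerivAt_pow 2 x).neg).exp.neg).div_const 2
    convert h using 1
    push_cast; simp only [Pi.neg_apply]; ring
  have hint : IntegrableOn (fun x : ℝ => x * Real.exp (-x^2)) (Set.Ioi y) := by
    have := (integrable_mul_exp_neg_mul_sq (one_pos (α := ℝ))).integrableOn (s := Set.Ioi y)
    simpa using this
  have htend : Filter.Tendsto (fun s : ℝ => -Real.exp (-s^2) / 2) Filter.atTop (nhds 0) := by
    have h1 : Filter.Tendsto (fun s : ℝ => -s^2) Filter.atTop Filter.atBot :=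
      Filter.tendsto_neg_atBot_iff.mpr (Filter.tendsto_pow_atTop two_ne_zero)
    have h2 := Real.tendsto_exp_atBot.comp h1
    have h3 := (h2.neg).div_const 2
    simpa using h3
  have := MeasureTheory.integral_Ioi_of_hasDerivAt_of_tendsto' hderiv hint htend
  rw [this]; ring

set_option maxHeartbeats 1000000 in
lemma tail_le {y : ℝ} (hy : 0 < y) :
    ∫ s in Set.Ioi y, Real.exp (-s^2) ≤ Real.exp (-y^2) / (2 * y) := by
  have hi1 : IntegrableOn (fun s : ℝ => Real.exp (-s^2)) (Set.Ioi y) :=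
    gauss_int.integrableOn
  have hi2 : IntegrableOn (fun s : ℝ => (1/y) * (s * Real.exp (-s^2))) (Set.Ioi y) := by
    have h : Integrable (fun x : ℝ => x * Real.exp (-x^2)) := by
      have := integrable_mul_exp_neg_mul_sq (one_pos (α := ℝ)); simpa using this
    exact (h.const_mul (1/y)).integrableOn
  have hle : ∫ s in Set.Ioi y, Real.exp (-s^2)
      ≤ ∫ s in Set.Ioi y, (1/y) * (s * Real.exp (-s^2)) := by
    refine setIntegral_mono_on hi1 hi2 measurableSet_Ioi ?_
    intro s hs
    ·
      have hsy : y < s := hs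
      have h1 : (1:ℝ) ≤ s / y := (one_le_div hy).mpr hsy.le
      have : Real.exp (-s^2) * 1 ≤ Real.exp (-s^2) * (s/y) :=
        mul_le_mul_of_nonneg_left h1 (Real.exp_pos _).le
      calc Real.exp (-s^2) = Real.exp (-s^2) * 1 := by ring
        _ ≤ Real.exp (-s^2) * (s/y) := this
        _ = (1/y) * (s * Real.exp (-s^2)) := by ring
  rw [MeasureTheory.integral_const_mul, tail_mul] at hle
  calc ∫ s in Set.Ioi y, Real.exp (-s^2) ≤ 1/y * (Real.exp (-y^2)/2) := hle
    _ = Real.exp (-y^2) / (2*y) := by field_simp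

lemma tail_nonneg (y : ℝ) : 0 ≤ ∫ s in Set.Ioi y, Real.exp (-s^2) :=
  setIntegral_nonneg measurableSet_Ioi (fun s _ => (Real.exp_pos _).le)


/-- The Gauss error function `erf x = (2/√π) ∫₀ˣ e^{-s²} ds`. -/
noncomputable def erf (x : ℝ) : ℝ := (2 / Real.sqrt π) * ∫ s in (0:ℝ)..x, Real.exp (-s ^ 2)

lemma erf_eq (y : ℝ) : erf y = 1 - (2 / Real.sqrt π) * ∫ s in Set.Ioi y, Real.exp (-s^2) := by
  have hIic : ∀ a : ℝ, ∫ s in Set.Iic a, Real.exp (-s^2)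
      = Real.sqrt π - ∫ s in Set.Ioi a, Real.exp (-s^2) := by
    intro a
    have h := intervalIntegral.integral_Iic_add_Ioi (b := a) (f := fun s : ℝ => Real.exp (-s^2))
      gauss_int.integrableOn gauss_int.integrableOn
    have hg : ∫ s : ℝ, Real.exp (-s^2) = Real.sqrt π := by
      have := integral_gaussian 1; simpa using this
    rw [hg] at h; linarith
  have hint : ∫ s in (0:ℝ)..y, Real.exp (-s^2)
      = (∫ s in Set.Iic y, Real.exp (-s^2)) - ∫ s in Set.Iic (0:ℝ), Real.exp (-s^2) :=
    (intervalIntegral.integral_Iic_sub_Iic gauss_int.integrableOn gauss_int.integrableOn).symm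
  have h0 : ∫ s in Set.Ioi (0:ℝ), Real.exp (-s^2) = Real.sqrt π / 2 := by
    have := integral_gaussian_Ioi 1; simpa using this
  have hpi : Real.sqrt π ≠ 0 := by positivity
  rw [erf, hint, hIic, hIic, h0]
  field_simp
  ring

lemma erf_odd (y : ℝ) : erf (-y) = - erf y := by
  rw [erf, erf, ← mul_neg]
  congr 1
  have : (∫ s in (0:ℝ)..(-y), Real.exp (-s^2))
      = ∫ s in (0:ℝ)..(-y), (fun x : ℝ => Real.exp (-x^2)) (-s) := by
    simp [neg_sq]
  rw [this, intervalIntegral.integral_comp_neg (a := 0) (b := -y)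
    (f := fun x : ℝ => Real.exp (-x^2)), neg_zero, neg_neg,
    intervalIntegral.integral_symm]

lemma erf_sub_one_abs {y : ℝ} (hy : 0 < y) :
    |erf y - 1| ≤ Real.exp (-y^2) / (y * Real.sqrt π) := by
  have h := erf_eq y
  have hT := tail_nonneg y
  have hle := tail_le hy
  have hpi : (0:ℝ) < Real.sqrt π := Real.sqrt_pos.mpr Real.pi_pos
  rw [h]
  have hcT : 0 ≤ (2 / Real.sqrt π) * ∫ s in Set.Ioi y, Real.exp (-s^2) :=
    mul_nonneg (by positivity) hT
  rw [abs_of_nonpos (by linarith)]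
  have : (2 / Real.sqrt π) * (∫ s in Set.Ioi y, Real.exp (-s^2))
      ≤ (2 / Real.sqrt π) * (Real.exp (-y^2) / (2*y)) :=
    mul_le_mul_of_nonneg_left hle (by positivity)
  calc -((1 - (2 / Real.sqrt π) * ∫ s in Set.Ioi y, Real.exp (-s^2)) - 1)
      = (2 / Real.sqrt π) * ∫ s in Set.Ioi y, Real.exp (-s^2) := by ring
    _ ≤ (2 / Real.sqrt π) * (Real.exp (-y^2) / (2*y)) := this
    _ = Real.exp (-y^2) / (y * Real.sqrt π) := by field_simp

/-- For `ε ∈ (0, √(2/(eπ))]`, `Δ > 0`, and `k = (√2/Δ)·√(ln(2/(πε²)))`, the scaled error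
function approximates the sign function: `|erf(kx) - sgn(x)| ≤ ε` whenever `|x| ≥ Δ/2`. -/
theorem erf_approx_sign (ε Δ k : ℝ) (hε0 : 0 < ε)
    (hε : ε ≤ Real.sqrt (2 / (Real.exp 1 * π))) (hΔ : 0 < Δ)
    (hk : k = (Real.sqrt 2 / Δ) * Real.sqrt (Real.log (2 / (π * ε ^ 2)))) :
    ∀ x : ℝ, Δ / 2 ≤ |x| → |erf (k * x) - Real.sign x| ≤ ε := by
  have hπ : 0 < π := Real.pi_pos
  set L := Real.log (2 / (π * ε ^ 2)) with hL
  have hε2 : ε ^ 2 ≤ 2 / (Real.exp 1 * π) := by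
    have h := pow_le_pow_left₀ hε0.le hε 2
    rwa [Real.sq_sqrt (by positivity)] at h
  have hden : 0 < π * ε ^ 2 := by positivity
  have h2 : Real.exp 1 * π * ε ^ 2 ≤ 2 := by
    have := (le_div_iff₀ (by positivity : (0:ℝ) < Real.exp 1 * π)).mp hε2
    nlinarith [this]
  have hL1 : 1 ≤ L := by
    rw [hL, Real.le_log_iff_exp_le (by positivity)]
    rw [le_div_iff₀ hden]
    nlinarith [h2]
  have hLpos : 0 < L := lt_of_lt_of_le one_pos hL1
  have hsLpos : 0 < Real.sqrt L := Real.sqrt_pos.mpr hLpos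
  set y₀ := Real.sqrt 2 * Real.sqrt L / 2 with hy0
  have hy0pos : 0 < y₀ := by
    rw [hy0]; positivity
  have hy0sq : y₀ ^ 2 = L / 2 := by
    rw [hy0, div_pow, mul_pow, Real.sq_sqrt (by norm_num : (0:ℝ) ≤ 2),
      Real.sq_sqrt hLpos.le]
    ring
  have hky : k * (Δ / 2) = y₀ := by
    rw [hk, hy0]; field_simp
  have hk0 : 0 ≤ k := by rw [hk]; positivity
  have hexpL : Real.exp (-L) = π * ε ^ 2 / 2 := by
    rw [hL, ← Real.log_inv, Real.exp_log (by positivity), inv_div]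
  have hexp : Real.exp (-y₀ ^ 2) = ε * Real.sqrt π / Real.sqrt 2 := by
    rw [hy0sq, show -(L/2) = (-L)/2 by ring, Real.exp_half, hexpL,
      Real.sqrt_div (by positivity), Real.sqrt_mul hπ.le, Real.sqrt_sq hε0.le, mul_comm (Real.sqrt π) ε]
  have key : ∀ y : ℝ, y₀ ≤ y → |erf y - 1| ≤ ε := by
    intro y hy
    have hypos : 0 < y := lt_of_lt_of_le hy0pos hy
    have h22 : Real.sqrt 2 * Real.sqrt 2 = 2 := Real.mul_self_sqrt (by norm_num)
    have hsL : Real.sqrt 2 * y₀ = Real.sqrt L := by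
      rw [hy0, show Real.sqrt 2 * (Real.sqrt 2 * Real.sqrt L / 2)
        = Real.sqrt 2 * Real.sqrt 2 * Real.sqrt L / 2 by ring, h22]
      ring
    calc |erf y - 1| ≤ Real.exp (-y^2) / (y * Real.sqrt π) := erf_sub_one_abs hypos
      _ ≤ Real.exp (-y₀^2) / (y₀ * Real.sqrt π) := by
          apply div_le_div₀ (Real.exp_pos _).le
            (Real.exp_le_exp.mpr (by nlinarith)) (by positivity)
            (mul_le_mul_of_nonneg_right hy (Real.sqrt_nonneg _))
      _ = ε / (Real.sqrt 2 * y₀) := by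
          rw [hexp]
          have hπ' : Real.sqrt π ≠ 0 := by positivity
          have h2' : Real.sqrt 2 ≠ 0 := by positivity
          field_simp
      _ = ε / Real.sqrt L := by rw [hsL]
      _ ≤ ε := by
          apply div_le_self hε0.le
          calc (1:ℝ) = Real.sqrt 1 := Real.sqrt_one.symm
            _ ≤ Real.sqrt L := Real.sqrt_le_sqrt hL1
  intro x hx
  rcases lt_trichotomy x 0 with hneg | h0 | hpos
  · have hxx : Δ/2 ≤ -x := by rwa [abs_of_neg hneg] at hx
    have hge : y₀ ≤ k * (-x) := by
      rw [← hky]; exact mul_le_mul_of_nonneg_left hxx hk0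
    rw [Real.sign_of_neg hneg, show k * x = -(k * (-x)) by ring, erf_odd,
      show -erf (k * (-x)) - (-1) = -(erf (k * (-x)) - 1) by ring, abs_neg]
    exact key _ hge
  · exfalso; rw [h0] at hx; simp at hx; linarith
  · have hxx : Δ/2 ≤ x := by rwa [abs_of_pos hpos] at hx
    have hge : y₀ ≤ k * x := by
      rw [← hky]; exact mul_le_mul_of_nonneg_left hxx hk0
    rw [Real.sign_of_pos hpos]
    exact key _ hge
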